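/- If V is a finite-dimensional real vector space with a skew-symmetric bilinear form ω, and W is a codimension-one subspace on which ω restricts to zero, and ω is not identically zero, then the kernel (radical) of ω has codimension one in W. -/
import Mathlib


/-- If `V` is a finite-dimensional real vector space with a skew-symmetric
bilinear form `B`, and `W` is a codimension-one subspace on which `B`
restricts to zero, and `B` is not identically zero, then the kernel (radical)
of `B` is contained in `W` and has codimension one in `W`. -/
theorem statement0 (V : Type*) [AddCommGroup V] [Module ℝ V] [FiniteDimensional ℝ V]
    (B : V →ₗ[ℝ] V →ₗ[ℝ] ℝ)
    (hskew : ∀ x y : V, B x y = - B y x)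
    (W : Submodule ℝ V)
    (hcodim : Module.finrank ℝ W + 1 = Module.finrank ℝ V)
    (hiso : ∀ x ∈ W, ∀ y ∈ W, B x y = 0)
    (hne : B ≠ 0) :
    LinearMap.ker B ≤ W ∧
      Module.finrank ℝ (LinearMap.ker B) + 1 = Module.finrank ℝ W := by
  -- general sup lemma
  have hsupgen : ∀ v : V, v ∉ W → W ⊔ Submodule.span ℝ {v} = ⊤ := by
    intro v hv
    have hlt : W < W ⊔ Submodule.span ℝ {v} := by
      refine lt_of_le_of_ne le_sup_left ?_
      intro h
      apply hv
      have : v ∈ W ⊔ Submodule.span ℝ {v} :=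
        Submodule.mem_sup_right (Submodule.mem_span_singleton_self v)
      rwa [← h] at this
    have h1 : Module.finrank ℝ W < Module.finrank ℝ (W ⊔ Submodule.span ℝ {v} : Submodule ℝ V) :=
      Submodule.finrank_lt_finrank_of_lt hlt
    have h2 : Module.finrank ℝ (W ⊔ Submodule.span ℝ {v} : Submodule ℝ V) ≤ Module.finrank ℝ V :=
      Submodule.finrank_le _
    exact Submodule.eq_top_of_finrank_eq (by omega)
  have hdecompgen : ∀ v : V, v ∉ W → ∀ x : V, ∃ w ∈ W, ∃ a : ℝ, x = w + a • v := by
    intro v hv x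
    have hx : x ∈ W ⊔ Submodule.span ℝ {v} := (hsupgen v hv) ▸ Submodule.mem_top
    obtain ⟨w, hw, z, hz, rfl⟩ := Submodule.mem_sup.mp hx
    obtain ⟨a, rfl⟩ := Submodule.mem_span_singleton.mp hz
    exact ⟨w, hw, a, rfl⟩
  -- ker B ≤ W
  have hkerW : LinearMap.ker B ≤ W := by
    intro v hv
    by_contra hvW
    have hv0 : ∀ u, B v u = 0 := by
      intro u
      have : B v = 0 := LinearMap.mem_ker.mp hv
      rw [this]; rfl
    apply hne
    ext x y
    obtain ⟨w, hw, a, rfl⟩ := hdecompgen v hvW x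
    obtain ⟨w', hw', b, rfl⟩ := hdecompgen v hvW y
    have h1 : B w v = 0 := by rw [hskew, hv0, neg_zero]
    simp [map_add, map_smul, hiso w hw w' hw', h1, hv0]
  -- pick v₀ ∉ W
  have hWne : W ≠ ⊤ := by
    intro h
    rw [h, finrank_top] at hcodim
    omega
  obtain ⟨v₀, -, hv₀⟩ := SetLike.exists_of_lt (lt_top_iff_ne_top.mpr hWne : W < ⊤)
  have hdecomp := hdecompgen v₀ hv₀
  -- key: w ∈ W with B w v₀ = 0 kills B w
  have keyA : ∀ w ∈ W, B w v₀ = 0 → ∀ y, B w y = 0 := by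
    intro w hw h0 y
    obtain ⟨w', hw', a, rfl⟩ := hdecomp y
    simp [map_add, map_smul, hiso w hw w' hw', h0]
  -- the functional φ
  set φ : W →ₗ[ℝ] ℝ := (B.flip v₀).domRestrict W with hφ
  have hφapp : ∀ w : W, φ w = B (w : V) v₀ := fun w => rfl
  have hphi : ∃ w ∈ W, B w v₀ ≠ 0 := by
    by_contra h
    push_neg at h
    apply hne
    ext x y
    obtain ⟨w, hw, a, rfl⟩ := hdecomp x
    have hBv₀ : ∀ u, B v₀ u = 0 := by
      intro u
      obtain ⟨w', hw', b, rfl⟩ := hdecomp u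
      have h1 : B v₀ w' = 0 := by rw [hskew, h w' hw', neg_zero]
      have h2 : B v₀ v₀ = 0 := by have := hskew v₀ v₀; linarith
      simp [map_add, map_smul, h1, h2]
    have hBw : ∀ u, B w u = 0 := keyA w hw (h w hw)
    simp [map_add, map_smul, hBw, hBv₀]
  -- ker φ = comap
  have hker : LinearMap.ker φ = (LinearMap.ker B).comap W.subtype := by
    ext w
    simp only [LinearMap.mem_ker, Submodule.mem_comap, Submodule.coe_subtype]
    constructor
    · intro h
      have h0 : B (w : V) v₀ = 0 := by rw [← hφapp, h]
      exact LinearMap.mem_ker.mpr (LinearMap.ext (keyA w w.2 h0))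
    · intro h
      rw [hφapp]
      have : B (w : V) = 0 := LinearMap.mem_ker.mp h
      rw [this]; rfl
  -- range φ = ⊤
  have hrange : LinearMap.range φ = ⊤ := by
    rcases eq_bot_or_eq_top (LinearMap.range φ) with h | h
    · exfalso
      obtain ⟨w, hw, hb⟩ := hphi
      have hm : φ ⟨w, hw⟩ ∈ LinearMap.range φ := LinearMap.mem_range_self _ _
      rw [h, Submodule.mem_bot] at hm
      exact hb (by rw [← hφapp ⟨w, hw⟩]; exact hm)
    · exact h
  have hrank := LinearMap.finrank_range_add_finrank_ker φ
  rw [hrange, finrank_top, Module.finrank_self] at hrank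
  have hequiv : Module.finrank ℝ ((LinearMap.ker B).comap W.subtype) = Module.finrank ℝ (LinearMap.ker B) :=
    (Submodule.comapSubtypeEquivOfLe hkerW).finrank_eq
  rw [hker, hequiv] at hrank
  exact ⟨hkerW, by omega⟩
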